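/- (Mod N Schinzel) Let P_1,...,P_s ∈ ℤ[y] (s ≥ 1) be polynomials such that no prime number p divides ∏_{i=1}^s P_i(m) for all m ∈ ℤ. Then for every N ≥ 1 there exist infinitely many m ∈ ℤ such that for each i, P_i(m) is congruent modulo N to some prime number not dividing N. -/

import Mathlib

open Polynomial

private lemma eval_modEq (F : Polynomial ℤ) {a b n : ℤ} (h : a ≡ b [ZMOD n]) :
    F.eval a ≡ F.eval b [ZMOD n] := by
  have h2 : a - b ∣ F.eval a - F.eval b := Polynomial.sub_dvd_eval_sub a b F
  have h3 : n ∣ a - b := Int.ModEq.dvd h.symm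
  exact Int.ModEq.symm (Int.modEq_iff_dvd.mpr (h3.trans h2))

private lemma exists_good_m (F : Polynomial ℤ)
    (h : ∀ p : ℤ, Prime p → ∃ m : ℤ, ¬ p ∣ F.eval m) :
    ∀ n : ℕ, 0 < n → ∃ m : ℤ, ∀ p : ℕ, p.Prime → p ∣ n → ¬ (p : ℤ) ∣ F.eval m := by
  intro n
  induction n using Nat.strong_induction_on with
  | _ n ih =>
    intro hn
    rcases eq_or_ne n 1 with rfl | hn1
    · exact ⟨0, fun p hp hpd => absurd (Nat.eq_one_of_dvd_one hpd) hp.ne_one⟩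
    · -- n has a prime factor
      have hn0 : n ≠ 0 := hn.ne'
      set p := n.minFac with hpdef
      have hp : p.Prime := Nat.minFac_prime hn1
      have hpn : p ∣ n := Nat.minFac_dvd n
      set k := n.factorization p with hkdef
      set t := n / p ^ k with htdef
      have hmul : p ^ k * t = n := Nat.ordProj_mul_ordCompl_eq_self n p
      have hpt : ¬ p ∣ t := Nat.not_dvd_ordCompl hp hn0
      have ht0 : 0 < t := Nat.ordCompl_pos p hn0
      have hk1 : 1 ≤ k := (Nat.Prime.factorization_pos_of_dvd hp hn0 hpn)
      have htlt : t < n := by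
        have h1 : 1 < p ^ k := Nat.one_lt_pow (by omega) hp.one_lt
        calc t = 1 * t := (one_mul t).symm
          _ < p ^ k * t := (Nat.mul_lt_mul_right ht0).mpr h1
          _ = n := hmul
      obtain ⟨m₁, hm₁⟩ := ih t htlt ht0
      obtain ⟨mp, hmp⟩ := h (p : ℤ) (Nat.prime_iff_prime_int.mp hp)
      -- CRT
      have hcop : IsCoprime (p : ℤ) (t : ℤ) :=
        Nat.isCoprime_iff_coprime.mpr ((Nat.Prime.coprime_iff_not_dvd hp).mpr hpt)
      obtain ⟨u, v, huv⟩ := hcop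
      refine ⟨mp * (v * t) + m₁ * (u * p), fun q hq hqn => ?_⟩
      rcases eq_or_ne q p with heq | hqp
      · -- q = p : use m ≡ mp mod p
        subst heq
        have hmod : (mp * (v * t) + m₁ * (u * p)) ≡ mp [ZMOD (p : ℤ)] := by
          apply Int.modEq_iff_dvd.mpr
          have hv : v * (t : ℤ) = 1 - u * p := by linear_combination huv
          refine ⟨mp * u - m₁ * u, ?_⟩
          rw [hv]; ring
        intro hdvd
        exact hmp (Int.modEq_zero_iff_dvd.mp
          ((eval_modEq F hmod).symm.trans (Int.modEq_zero_iff_dvd.mpr hdvd)))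
      · -- q ∣ t
        have hqt : q ∣ t := by
          have : q ∣ p ^ k * t := hmul ▸ hqn
          rcases (Nat.Prime.dvd_mul hq).mp this with h' | h'
          · exact absurd ((Nat.prime_dvd_prime_iff_eq hq hp).mp (hq.dvd_of_dvd_pow h')) hqp
          · exact h'
        have hmod : (mp * (v * t) + m₁ * (u * p)) ≡ m₁ [ZMOD (q : ℤ)] := by
          have hqtz : (q : ℤ) ∣ (t : ℤ) := Int.natCast_dvd_natCast.mpr hqt
          apply Int.modEq_iff_dvd.mpr
          have hu : u * (p : ℤ) = 1 - v * t := by linear_combination huv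
          have heq2 : m₁ - (mp * (v * t) + m₁ * (u * p)) = (m₁ * v - mp * v) * t := by
            rw [hu]; ring
          rw [heq2]; exact Dvd.dvd.mul_left hqtz _
        intro hdvd
        exact hm₁ q hq hqt (Int.modEq_zero_iff_dvd.mp
          ((eval_modEq F hmod).symm.trans (Int.modEq_zero_iff_dvd.mpr hdvd)))

theorem stmt_14 (s : ℕ) (hs : 1 ≤ s) (P : Fin s → Polynomial ℤ)
    (hAV1 : ∀ p : ℤ, Prime p → ∃ m : ℤ, ¬ p ∣ (∏ i, P i).eval m) :
    ∀ N : ℤ, 1 ≤ N →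
      {m : ℤ | ∀ i, ∃ q : ℕ, q.Prime ∧ ¬ (q : ℤ) ∣ N ∧
        (P i).eval m ≡ (q : ℤ) [ZMOD N]}.Infinite := by
  intro N hN
  set n := N.natAbs with hndef
  have hNn : (n : ℤ) = N := Int.natAbs_of_nonneg (by linarith)
  have hn0 : 0 < n := by
    have : N ≠ 0 := by linarith
    exact Int.natAbs_pos.mpr this
  haveI : NeZero n := ⟨hn0.ne'⟩
  obtain ⟨m₀, hm₀⟩ := exists_good_m (∏ i, P i) hAV1 n hn0
  -- coprimality of the product evaluation with N
  have hcopF : IsCoprime ((∏ i, P i).eval m₀) N := by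
    rw [Int.isCoprime_iff_gcd_eq_one]
    by_contra hg
    have hgpos : 0 < Int.gcd ((∏ i, P i).eval m₀) N := by
      rw [Int.gcd_pos_iff]; right; exact (by linarith : N ≠ 0)
    have hg1 : 1 < Int.gcd ((∏ i, P i).eval m₀) N := lt_of_le_of_ne hgpos (Ne.symm hg)
    set g := Int.gcd ((∏ i, P i).eval m₀) N
    have hq : g.minFac.Prime := Nat.minFac_prime (by omega)
    have hq1 : (g.minFac : ℤ) ∣ (∏ i, P i).eval m₀ :=
      dvd_trans (Int.natCast_dvd_natCast.mpr (Nat.minFac_dvd g)) (Int.gcd_dvd_left _ _)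
    have hq2 : g.minFac ∣ n := by
      have : (g.minFac : ℤ) ∣ N :=
        dvd_trans (Int.natCast_dvd_natCast.mpr (Nat.minFac_dvd g)) (Int.gcd_dvd_right _ _)
      rw [← hNn] at this
      exact_mod_cast Int.natCast_dvd_natCast.mp (by rwa [Int.dvd_natAbs] at this ⊢)
    exact hm₀ g.minFac hq hq2 hq1
  have hcopP : ∀ i, IsCoprime ((P i).eval m₀) N := by
    intro i
    have : IsCoprime (∏ i, (P i).eval m₀) N := by
      rwa [Polynomial.eval_prod] at hcopF
    exact (IsCoprime.prod_left_iff.mp this) i (Finset.mem_univ i)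
  -- for each i, get a prime q_i ≡ P_i(m₀) mod N, not dividing N
  have hqex : ∀ i, ∃ q : ℕ, q.Prime ∧ ¬ (q : ℤ) ∣ N ∧
      (P i).eval m₀ ≡ (q : ℤ) [ZMOD N] := by
    intro i
    set a := (P i).eval m₀
    have hunit : IsUnit ((a : ℤ) : ZMod n) := by
      obtain ⟨u, v, huv⟩ := hcopP i
      have : ((u : ℤ) : ZMod n) * ((a : ℤ) : ZMod n) = 1 := by
        have hNz : ((N : ℤ) : ZMod n) = 0 := by
          rw [← hNn]; exact_mod_cast ZMod.natCast_self n
        have := congrArg (fun x : ℤ => (x : ZMod n)) huv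
        push_cast at this
        rw [hNz] at this
        simpa using this
      exact IsUnit.of_mul_eq_one _ (by rw [mul_comm] at this; exact this)
    obtain ⟨q, hq, hqprime, hqmod⟩ :=
      Nat.forall_exists_prime_gt_and_eq_mod hunit 0
    refine ⟨q, hqprime, ?_, ?_⟩
    · intro hdvd
      have hmod : (q : ℤ) ≡ a [ZMOD N] := by
        rw [← hNn]
        exact (ZMod.intCast_eq_intCast_iff _ _ _).mp (by push_cast; exact hqmod)
      have hNd : N ∣ a - q := Int.ModEq.dvd hmod
      have hqa : (q : ℤ) ∣ a := by
        have h4 := hdvd.trans hNd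
        simpa using dvd_add h4 (dvd_refl ((q : ℕ) : ℤ))
      exact (Nat.prime_iff_prime_int.mp hqprime).not_unit
        ((hcopP i).isUnit_of_dvd' hqa hdvd)
    · rw [← hNn]
      exact ((ZMod.intCast_eq_intCast_iff _ _ _).mp (by push_cast; exact hqmod)).symm
  -- the set contains m₀ + k * N for all k
  choose q hq1 hq2 hq3 using hqex
  apply Set.infinite_of_injective_forall_mem
    (f := fun k : ℤ => m₀ + k * N)
  · intro a b hab
    simp only [add_right_inj] at hab
    exact mul_right_cancel₀ (by linarith : N ≠ 0) hab
  · intro k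
    simp only [Set.mem_setOf_eq]
    intro i
    refine ⟨q i, hq1 i, hq2 i, ?_⟩
    have hmm : (m₀ + k * N) ≡ m₀ [ZMOD N] := by
      have : N ∣ (m₀ + k * N) - m₀ := ⟨k, by ring⟩
      exact (Int.modEq_iff_dvd.mpr (by simpa using dvd_neg.mpr this)).symm
    exact (eval_modEq (P i) hmm).trans (hq3 i)
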